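/- Let X and Y be locally spectral topological spaces and let f : X → Y be a surjective, generalizing continuous map (i.e., for every x ∈ X and every generalization y' of f(x) in Y there exists a generalization x' of x with f(x') = y'). Then the Krull dimension of X is at least the Krull dimension of Y. -/
import Mathlib


/-- The Krull dimension of a topological space: the supremum of the lengths `k` of chains
`x₀ ≺ x₁ ≺ ⋯ ≺ x_k` of distinct points, each a proper generalization of the previous one,
i.e. the Krull dimension of the specialization preorder. -/
noncomputable def specKrullDim (X : Type*) [TopologicalSpace X] : WithBot ℕ∞ :=
  @Order.krullDim X (specializationPreorder X)

/-- A topological space is spectral if it is quasicompact, `T0`, quasi-sober, and its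
quasicompact open subsets form a basis which is stable under finite intersections. -/
structure IsSpectralSpace (X : Type*) [TopologicalSpace X] : Prop where
  compact : CompactSpace X
  t0 : T0Space X
  sober : QuasiSober X
  basis : TopologicalSpace.IsTopologicalBasis {U : Set X | IsOpen U ∧ IsCompact U}
  inter : ∀ U V : Set X, IsOpen U → IsCompact U → IsOpen V → IsCompact V → IsCompact (U ∩ V)

/-- A topological space is locally spectral if it admits an open cover by spectral spaces. -/
def IsLocallySpectral (X : Type*) [TopologicalSpace X] : Prop :=
  ∀ x : X, ∃ U : Set X, IsOpen U ∧ x ∈ U ∧ IsSpectralSpace U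

/-- If `f : X → Y` is a surjective, generalizing continuous map of locally spectral spaces,
then the Krull dimension of `X` is at least the Krull dimension of `Y`. -/
theorem specKrullDim_le_of_surjective_generalizing
    {X Y : Type*} [TopologicalSpace X] [TopologicalSpace Y]
    (hX : IsLocallySpectral X) (hY : IsLocallySpectral Y)
    (f : X → Y) (hcont : Continuous f) (hsurj : Function.Surjective f)
    (hgen : GeneralizingMap f) :
    specKrullDim Y ≤ specKrullDim X := by
  letI : Preorder X := specializationPreorder X
  letI : Preorder Y := specializationPreorder Y
  show Order.krullDim Y ≤ Order.krullDim X
  rw [Order.krullDim, Order.krullDim]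
  refine iSup_le fun p => ?_
  suffices h : ∀ n (p : LTSeries Y), p.length = n →
      ∃ q : LTSeries X, q.length = n ∧ f q.last = p.last by
    obtain ⟨q, hq, -⟩ := h p.length p rfl
    exact hq ▸ le_iSup (fun q : LTSeries X => (q.length : WithBot ℕ∞)) q
  intro n
  induction n with
  | zero =>
    intro p _
    obtain ⟨x, hx⟩ := hsurj p.last
    exact ⟨RelSeries.singleton _ x, rfl, hx⟩
  | succ n ih =>
    intro p hp
    obtain ⟨q, hq, hlast⟩ := ih p.eraseLast (by simp [hp])
    have hrel : p.eraseLast.last < p.last := p.eraseLast_last_rel_last (by omega)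
    have hspec : p.last ⤳ f q.last := hlast ▸ hrel.1
    obtain ⟨x', hx'spec, hx'⟩ := hgen hspec
    have hlt : q.last < x' := by
      refine ⟨hx'spec, fun h => hrel.2 ?_⟩
      rw [← hlast, ← hx']
      exact Specializes.map h hcont
    exact ⟨q.snoc x' hlt, by simp [hq], by simp [hx']⟩
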